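/- Let N ≥ 1, V: ℝ² → ℝ smooth, f_{j,0}: ℝ² → ℝ smooth for 0 ≤ j ≤ N, and f_{j,2}: ℝ² → ℝ smooth for 0 ≤ j ≤ N−2, with the convention that f_{j,0} and f_{j,2} are zero for indices outside these ranges. Suppose that for all 0 ≤ j ≤ N−1 the ℓ = 1 classical determining equations hold on ℝ²: 2(∂_x f_{j−1,2} + ∂_y f_{j,2}) = (j+1) f_{j+1,0} ∂_x V + (N−j) f_{j,0} ∂_y V. Then the potential V satisfies the linear compatibility partial differential equation Σ_{j=0}^{N−1} (−1)^j ∂_x^{N−1−j} ∂_y^j [ (j+1) f_{j+1,0} ∂_x V + (N−j) f_{j,0} ∂_y V ] = 0 identically on ℝ². -/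

import Mathlib

noncomputable section

/-- Partial derivative with respect to `x` of a function on `ℝ²`. -/
def pdx (f : ℝ × ℝ → ℝ) : ℝ × ℝ → ℝ := fun q => fderiv ℝ f q (1, 0)

/-- Partial derivative with respect to `y` of a function on `ℝ²`. -/
def pdy (f : ℝ × ℝ → ℝ) : ℝ × ℝ → ℝ := fun q => fderiv ℝ f q (0, 1)

namespace Stmt5Aux

abbrev Sm (f : ℝ × ℝ → ℝ) : Prop := ContDiff ℝ (⊤ : ℕ∞) f

lemma topadd : ((⊤:ℕ∞) : WithTop ℕ∞) + 1 ≤ ((⊤:ℕ∞) : WithTop ℕ∞) := by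
  exact_mod_cast (le_top : (⊤:ℕ∞) + 1 ≤ ⊤)

lemma oneletop : (1 : WithTop ℕ∞) ≤ ((⊤:ℕ∞) : WithTop ℕ∞) := by
  exact_mod_cast (le_top : (1:ℕ∞) ≤ ⊤)

lemma cdiff {E F : Type*} [NormedAddCommGroup E] [NormedSpace ℝ E] [NormedAddCommGroup F]
    [NormedSpace ℝ F] {f : E → F} (hf : ContDiff ℝ (⊤:ℕ∞) f) : Differentiable ℝ f :=
  hf.differentiable (ne_of_gt (lt_of_lt_of_le zero_lt_one oneletop))

lemma Sm.fd {f} (hf : Sm f) : ContDiff ℝ (⊤:ℕ∞) (fun x => fderiv ℝ f x) := hf.fderiv_right topadd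

lemma sm_pdv {f} (hf : Sm f) (v : ℝ × ℝ) : Sm (fun q => fderiv ℝ f q v) :=
  hf.fd.clm_apply contDiff_const

lemma sm_pdx {f} (hf : Sm f) : Sm (pdx f) := sm_pdv hf _
lemma sm_pdy {f} (hf : Sm f) : Sm (pdy f) := sm_pdv hf _

lemma fderiv_fderiv_apply {f} (hf : Sm f) (q v w : ℝ × ℝ) :
    fderiv ℝ (fun p => fderiv ℝ f p v) q w = fderiv ℝ (fderiv ℝ f) q w v := by
  have hdf : DifferentiableAt ℝ (fderiv ℝ f) q := cdiff hf.fd q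
  have h : HasFDerivAt (fun p => fderiv ℝ f p v)
      ((ContinuousLinearMap.apply ℝ ℝ v).comp (fderiv ℝ (fderiv ℝ f) q)) q :=
    (ContinuousLinearMap.apply ℝ ℝ v).hasFDerivAt.comp q hdf.hasFDerivAt
  rw [h.fderiv]
  rfl

lemma comm {f} (hf : Sm f) : pdx (pdy f) = pdy (pdx f) := by
  funext q
  have e1 : pdx (pdy f) q = fderiv ℝ (fun p => fderiv ℝ f p (0, 1)) q (1, 0) := rfl
  have e2 : pdy (pdx f) q = fderiv ℝ (fun p => fderiv ℝ f p (1, 0)) q (0, 1) := rfl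
  rw [e1, e2, fderiv_fderiv_apply hf, fderiv_fderiv_apply hf]
  exact second_derivative_symmetric (fun y => (cdiff hf y).hasFDerivAt)
    ((cdiff hf.fd q).hasFDerivAt) _ _

lemma pdv_lin (w : ℝ × ℝ) {u v : ℝ × ℝ → ℝ} (hu : Sm u) (hv : Sm v) :
    (fun q => fderiv ℝ (fun p => 2 * (u p + v p)) q w)
      = fun q => 2 * (fderiv ℝ u q w + fderiv ℝ v q w) := by
  funext q
  have h := (((cdiff hu q).hasFDerivAt.add (cdiff hv q).hasFDerivAt).const_mul (2 : ℝ))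
  rw [show (fun p => 2 * (u p + v p)) = fun y => 2 * (u + v) y from rfl, h.fderiv]
  simp
  ring

lemma sm_lin {u v : ℝ × ℝ → ℝ} (hu : Sm u) (hv : Sm v) : Sm (fun p => 2 * (u p + v p)) :=
  ContDiff.mul contDiff_const (hu.add hv)

lemma sm_pdy_iter {f} (hf : Sm f) (b : ℕ) : Sm (pdy^[b] f) := by
  induction b generalizing f with
  | zero => exact hf
  | succ b ih =>
    rw [Function.iterate_succ_apply]
    exact ih (sm_pdy hf)

lemma sm_pdx_iter {f} (hf : Sm f) (a : ℕ) : Sm (pdx^[a] f) := by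
  induction a generalizing f with
  | zero => exact hf
  | succ a ih =>
    rw [Function.iterate_succ_apply]
    exact ih (sm_pdx hf)

lemma pdy_iter_comm {f} (hf : Sm f) (b : ℕ) : pdy^[b] (pdx f) = pdx (pdy^[b] f) := by
  induction b generalizing f with
  | zero => rfl
  | succ b ih =>
    rw [Function.iterate_succ_apply, Function.iterate_succ_apply, ← comm hf, ih (sm_pdy hf)]

lemma pdy_iter_lin {u v : ℝ × ℝ → ℝ} (hu : Sm u) (hv : Sm v) (b : ℕ) :
    pdy^[b] (fun p => 2 * (u p + v p)) = fun p => 2 * (pdy^[b] u p + pdy^[b] v p) := by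
  induction b generalizing u v with
  | zero => rfl
  | succ b ih =>
    rw [Function.iterate_succ_apply, Function.iterate_succ_apply, Function.iterate_succ_apply]
    rw [show pdy (fun p => 2 * (u p + v p)) = fun p => 2 * (pdy u p + pdy v p) from
      pdv_lin _ hu hv]
    exact ih (sm_pdy hu) (sm_pdy hv)

lemma pdx_iter_lin {u v : ℝ × ℝ → ℝ} (hu : Sm u) (hv : Sm v) (a : ℕ) :
    pdx^[a] (fun p => 2 * (u p + v p)) = fun p => 2 * (pdx^[a] u p + pdx^[a] v p) := by
  induction a generalizing u v with
  | zero => rfl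
  | succ a ih =>
    rw [Function.iterate_succ_apply, Function.iterate_succ_apply, Function.iterate_succ_apply]
    rw [show pdx (fun p => 2 * (u p + v p)) = fun p => 2 * (pdx u p + pdx v p) from
      pdv_lin _ hu hv]
    exact ih (sm_pdx hu) (sm_pdx hv)

lemma key {A B : ℝ × ℝ → ℝ} (hA : Sm A) (hB : Sm B) (a b : ℕ) :
    pdx^[a] (pdy^[b] (fun p => 2 * (pdx A p + pdy B p)))
      = fun q => 2 * (pdx^[a + 1] (pdy^[b] A) q + pdx^[a] (pdy^[b + 1] B) q) := by
  rw [pdy_iter_lin (sm_pdx hA) (sm_pdy hB) b, pdy_iter_comm hA b]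
  rw [pdx_iter_lin (sm_pdx (sm_pdy_iter hA b)) (sm_pdy_iter (sm_pdy hB) b) a]
  funext q
  rw [← Function.iterate_succ_apply pdx a, ← Function.iterate_succ_apply pdy b]

lemma pdx_zero : pdx (0 : ℝ × ℝ → ℝ) = 0 := by
  funext q
  show fderiv ℝ (fun _ => (0:ℝ)) q (1, 0) = 0
  rw [fderiv_const_apply]
  simp

lemma pdy_zero : pdy (0 : ℝ × ℝ → ℝ) = 0 := by
  funext q
  show fderiv ℝ (fun _ => (0:ℝ)) q (0, 1) = 0
  rw [fderiv_const_apply]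
  simp

lemma pdx_iter_zero (a : ℕ) : pdx^[a] (0 : ℝ × ℝ → ℝ) = 0 :=
  Function.iterate_fixed pdx_zero a

lemma pdy_iter_zero (b : ℕ) : pdy^[b] (0 : ℝ × ℝ → ℝ) = 0 :=
  Function.iterate_fixed pdy_zero b

end Stmt5Aux

/-- if the `ℓ = 1` classical determining equations
`2(∂_x f_{j−1,2} + ∂_y f_{j,2}) = (j+1) f_{j+1,0} ∂_x V + (N−j) f_{j,0} ∂_y V`
hold for all `0 ≤ j ≤ N−1`, then the potential satisfies the linear compatibility PDE
`Σ_{j=0}^{N−1} (−1)^j ∂_x^{N−1−j} ∂_y^j [(j+1) f_{j+1,0} ∂_x V + (N−j) f_{j,0} ∂_y V] = 0`. -/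
theorem stmt_5 (N : ℕ) (hN : 1 ≤ N) (V : ℝ × ℝ → ℝ) (hV : ContDiff ℝ (⊤ : ℕ∞) V)
    (f0 : ℕ → ℝ × ℝ → ℝ) (hf0 : ∀ j : ℕ, j ≤ N → ContDiff ℝ (⊤ : ℕ∞) (f0 j))
    (f2 : ℤ → ℝ × ℝ → ℝ)
    (hf2 : ∀ j : ℤ, 0 ≤ j → j ≤ (N : ℤ) - 2 → ContDiff ℝ (⊤ : ℕ∞) (f2 j))
    (hf2zero : ∀ j : ℤ, (j < 0 ∨ (N : ℤ) - 2 < j) → f2 j = 0)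
    (hdet : ∀ j : ℕ, j < N → ∀ q : ℝ × ℝ,
      2 * (pdx (f2 ((j : ℤ) - 1)) q + pdy (f2 (j : ℤ)) q) =
        ((j : ℝ) + 1) * f0 (j + 1) q * pdx V q + ((N : ℝ) - (j : ℝ)) * f0 j q * pdy V q) :
    ∀ q : ℝ × ℝ,
      ∑ j ∈ Finset.range N, (-1 : ℝ) ^ j *
        (pdx^[N - 1 - j] (pdy^[j] (fun p =>
          ((j : ℝ) + 1) * f0 (j + 1) p * pdx V p +
            ((N : ℝ) - (j : ℝ)) * f0 j p * pdy V p))) q = 0 := by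
  intro q
  have hsm : ∀ j : ℤ, Stmt5Aux.Sm (f2 j) := by
    intro j
    by_cases h1 : 0 ≤ j
    · by_cases h2 : j ≤ (N : ℤ) - 2
      · exact hf2 j h1 h2
      · rw [hf2zero j (Or.inr (by omega))]; exact contDiff_const
    · rw [hf2zero j (Or.inl (by omega))]; exact contDiff_const
  set u : ℕ → ℝ := fun j => pdx^[N - 1 - j] (pdy^[j + 1] (f2 (j : ℤ))) q with hu
  set g : ℕ → ℝ := fun m => Nat.casesOn m 0 (fun k => 2 * (-1 : ℝ) ^ k * u k) with hg
  have hterm : ∀ j ∈ Finset.range N,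
      (-1 : ℝ) ^ j * (pdx^[N - 1 - j] (pdy^[j] (fun p =>
        ((j : ℝ) + 1) * f0 (j + 1) p * pdx V p +
          ((N : ℝ) - (j : ℝ)) * f0 j p * pdy V p))) q = g (j + 1) - g j := by
    intro j hj
    rw [Finset.mem_range] at hj
    have hF : (fun p => ((j : ℝ) + 1) * f0 (j + 1) p * pdx V p +
          ((N : ℝ) - (j : ℝ)) * f0 j p * pdy V p)
        = fun p => 2 * (pdx (f2 ((j : ℤ) - 1)) p + pdy (f2 (j : ℤ)) p) :=
      funext fun p => (hdet j hj p).symm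
    rw [hF, Stmt5Aux.key (hsm _) (hsm _)]
    cases j with
    | zero =>
      have h0 : ((0 : ℕ) : ℤ) - 1 = (-1 : ℤ) := by norm_num
      rw [h0, hf2zero (-1) (Or.inl (by norm_num))]
      have hzz : pdx^[N - 1 - 0 + 1] (pdy^[0] (0 : ℝ × ℝ → ℝ)) q = 0 := by
        rw [Function.iterate_zero_apply, Stmt5Aux.pdx_iter_zero]; rfl
      show (-1 : ℝ) ^ 0 * (2 * (pdx^[N - 1 - 0 + 1] (pdy^[0] (0 : ℝ × ℝ → ℝ)) q + u 0))
        = g (0 + 1) - g 0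
      rw [hzz]
      show (-1 : ℝ) ^ 0 * (2 * (0 + u 0)) = 2 * (-1 : ℝ) ^ 0 * u 0 - 0
      ring
    | succ k =>
      have e1 : N - 1 - (k + 1) + 1 = N - 1 - k := by omega
      have e2 : ((k + 1 : ℕ) : ℤ) - 1 = (k : ℤ) := by push_cast; ring
      rw [e1, e2]
      show (-1 : ℝ) ^ (k + 1) * (2 * (u k + u (k + 1))) = g (k + 2) - g (k + 1)
      show (-1 : ℝ) ^ (k + 1) * (2 * (u k + u (k + 1)))
        = 2 * (-1 : ℝ) ^ (k + 1) * u (k + 1) - 2 * (-1 : ℝ) ^ k * u k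
      ring
  rw [Finset.sum_congr rfl hterm, Finset.sum_range_sub g]
  have hgN : g N = 2 * (-1 : ℝ) ^ (N - 1) * u (N - 1) := by
    obtain ⟨M, hM⟩ : ∃ M, N = M + 1 := ⟨N - 1, by omega⟩
    subst hM
    simp [hg]
  have hz : f2 ((N - 1 : ℕ) : ℤ) = 0 :=
    hf2zero _ (Or.inr (by push_cast [Nat.cast_sub hN]; omega))
  have hu1 : u (N - 1) = 0 := by
    show pdx^[N - 1 - (N - 1)] (pdy^[N - 1 + 1] (f2 ((N - 1 : ℕ) : ℤ))) q = 0
    rw [hz, Stmt5Aux.pdy_iter_zero, Stmt5Aux.pdx_iter_zero]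
    rfl
  rw [hgN, hu1]
  simp [hg]
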